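/- Let L be a Lie hyperalgebra and n ≥ 1. Define P(x) = {y ∈ L : x S_n y} for x ∈ L. Then the following are equivalent: (i) S_n is transitive; (ii) S_n*(x) = P(x) for every x ∈ L; (iii) P(x) is an S_n-part of L for every x ∈ L. -/
import Mathlib


def ext2 {α : Type*} (f : α → α → Set α) (A B : Set α) : Set α :=
  ⋃ a ∈ A, ⋃ b ∈ B, f a b

def IsSemihypergroup {α : Type*} (f : α → α → Set α) : Prop :=
  (∀ a b, (f a b).Nonempty) ∧ ∀ a b c, ext2 f (f a b) {c} = ext2 f {a} (f b c)

def IsHypergroup {α : Type*} (f : α → α → Set α) : Prop :=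
  IsSemihypergroup f ∧ ∀ a, (⋃ b, f a b) = Set.univ ∧ (⋃ b, f b a) = Set.univ

structure LieHyperalgebra (F : Type*) (L : Type*) where
  fadd : F → F → Set F
  fmul : F → F → Set F
  fzero : F
  fone : F
  add : L → L → Set L
  smul : F → L → Set L
  zero : L
  bracket : L → L → Set L
  fadd_hypergroup : IsHypergroup fadd
  fmul_semihypergroup : IsSemihypergroup fmul
  fmul_repro : ∀ a, a ≠ fzero → ∀ c, c ≠ fzero → (∃ b, c ∈ fmul a b) ∧ (∃ b, c ∈ fmul b a)
  fdistrib_left : ∀ a b c, (⋃ x ∈ fadd b c, fmul a x) = ext2 fadd (fmul a b) (fmul a c)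
  fdistrib_right : ∀ a b c, (⋃ x ∈ fadd a b, fmul x c) = ext2 fadd (fmul a c) (fmul b c)
  add_hypergroup : IsHypergroup add
  smul_add : ∀ (a : F) (x y : L), (⋃ z ∈ add x y, smul a z) = ext2 add (smul a x) (smul a y)
  add_smul : ∀ (a b : F) (x : L), (⋃ c ∈ fadd a b, smul c x) = ext2 add (smul a x) (smul b x)
  mul_smul : ∀ (a b : F) (x : L), (⋃ c ∈ fmul a b, smul c x) = ⋃ y ∈ smul b x, smul a y
  zero_smul : ∀ x, smul fzero x = {zero}
  one_smul : ∀ x, smul fone x = {x}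
  bracket_bilin_left : ∀ (l1 l2 : F) (x1 x2 y : L),
    ext2 bracket (ext2 add (smul l1 x1) (smul l2 x2)) {y}
      = ext2 add (⋃ z ∈ bracket x1 y, smul l1 z) (⋃ z ∈ bracket x2 y, smul l2 z)
  bracket_bilin_right : ∀ (l1 l2 : F) (x y1 y2 : L),
    ext2 bracket {x} (ext2 add (smul l1 y1) (smul l2 y2))
      = ext2 add (⋃ z ∈ bracket x y1, smul l1 z) (⋃ z ∈ bracket x y2, smul l2 z)
  bracket_refl : ∀ x, zero ∈ bracket x x
  jacobi : ∀ x y z, zero ∈ ext2 add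
    (ext2 add (ext2 bracket {x} (bracket y z)) (ext2 bracket {y} (bracket z x)))
    (ext2 bracket {z} (bracket x y))

/-- Hypersum `A 0 + A 1 + ⋯ + A t` of finitely many sets w.r.t. a hyperoperation. -/
def hsumSet {α : Type*} (f : α → α → Set α) : ∀ {t : ℕ}, (Fin (t + 1) → Set α) → Set α
  | 0, A => A 0
  | _ + 1, A => ext2 f (A 0) (hsumSet f (A ∘ Fin.succ))

/-- Hyperproduct `lam 0 · lam 1 ⋯ · lam q` of finitely many elements. -/
def hprod {α : Type*} (f : α → α → Set α) : ∀ {q : ℕ}, (Fin (q + 1) → α) → Set α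
  | 0, lam => {lam 0}
  | _ + 1, lam => ext2 f {lam 0} (hprod f (lam ∘ Fin.succ))

/-- Formal hyperbracket expressions in `m` variables: arbitrary compositions of the
arguments using only the hyperbracket. -/
inductive BExpr : ℕ → Type
  | leaf {m : ℕ} : Fin m → BExpr m
  | br {m : ℕ} : BExpr m → BExpr m → BExpr m

namespace LieHyperalgebra

variable {F L : Type*} (H : LieHyperalgebra F L)

def derivedSet : ℕ → Set L
  | 0 => Set.univ
  | i + 1 => ext2 H.bracket (derivedSet i) (derivedSet i)

/-- Evaluation of a hyperbracket expression on set-valued arguments. -/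
def evalBExpr : ∀ {m : ℕ}, BExpr m → (Fin m → Set L) → Set L
  | _, .leaf j, g => g j
  | _, .br e₁ e₂, g => ext2 H.bracket (evalBExpr e₁ g) (evalBExpr e₂ g)

/-- The data occurring in the definition of the relation `𝒮ₙ`. -/
structure SData (n : ℕ) where
  t : ℕ
  σ : Equiv.Perm (Fin (t + 1))
  m : Fin (t + 1) → ℕ
  f : ∀ i, BExpr (m i + 1)
  h : ∀ i, Fin (m i + 1) → L
  p : ∀ i, Fin (m i + 1) → ℕ
  q : ∀ i j, Fin (p i j + 1) → ℕ
  lam : ∀ i j k, Fin (q i j k + 1) → F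
  σi : ∀ i, Equiv.Perm (Fin (m i + 1))
  σi_fix : ∀ i j, h i j ∉ H.derivedSet (n - 1) → σi i j = j
  σij : ∀ i j, Equiv.Perm (Fin (p i j + 1))
  σijk : ∀ i j k, Equiv.Perm (Fin (q i j k + 1))

namespace SData

variable {H} {n : ℕ} (d : SData H n)

/-- `g_{ij} = (Σ_k Π_r λ_{ijkr}) · h_{ij}`. -/
def g (i : Fin (d.t + 1)) (j : Fin (d.m i + 1)) : Set L :=
  ⋃ c ∈ hsumSet H.fadd (fun k => hprod H.fmul (d.lam i j k)), H.smul c (d.h i j)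

/-- `A_{ij} = Σ_k B_{ij σ_{ij}(k)}` with `B_{ijk} = Π_r λ_{ijk σ_{ijk}(r)}`. -/
def A (i : Fin (d.t + 1)) (j : Fin (d.m i + 1)) : Set F :=
  hsumSet H.fadd (fun k =>
    hprod H.fmul (fun r => d.lam i j (d.σij i j k) (d.σijk i j (d.σij i j k) r)))

/-- `g'_{ij} = A_{σ(i) σ_{σ(i)}(j)} · h_{σ(i) σ_{σ(i)}(j)}`. -/
def g' (i : Fin (d.t + 1)) (j : Fin (d.m (d.σ i) + 1)) : Set L :=
  ⋃ c ∈ d.A (d.σ i) (d.σi (d.σ i) j), H.smul c (d.h (d.σ i) (d.σi (d.σ i) j))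

/-- `Σ_i ℓ_i` where `ℓ_i = f_i(g_{i1},…,g_{im_i})`. -/
def lhs : Set L := hsumSet H.add (fun i => H.evalBExpr (d.f i) (d.g i))

/-- `Σ_i ℓ'_i` where `ℓ'_i = f_{σ(i)}(g'_{i1},…,g'_{im_{σ(i)}})`. -/
def rhs : Set L := hsumSet H.add (fun i => H.evalBExpr (d.f (d.σ i)) (d.g' i))

end SData

/-- The relation `𝒮ₙ` on a Lie hyperalgebra. -/
def SRel (n : ℕ) (x y : L) : Prop := ∃ d : SData H n, x ∈ d.lhs ∧ y ∈ d.rhs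

/-- Data for the relation `𝒜` (no restriction on the permutations `σᵢ`). -/
structure AData (F L : Type*) where
  t : ℕ
  σ : Equiv.Perm (Fin (t + 1))
  m : Fin (t + 1) → ℕ
  f : ∀ i, BExpr (m i + 1)
  h : ∀ i, Fin (m i + 1) → L
  p : ∀ i, Fin (m i + 1) → ℕ
  q : ∀ i j, Fin (p i j + 1) → ℕ
  lam : ∀ i j k, Fin (q i j k + 1) → F
  σi : ∀ i, Equiv.Perm (Fin (m i + 1))
  σij : ∀ i j, Equiv.Perm (Fin (p i j + 1))
  σijk : ∀ i j k, Equiv.Perm (Fin (q i j k + 1))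

variable {H}

def aG (d : AData F L) (i : Fin (d.t + 1)) (j : Fin (d.m i + 1)) : Set L :=
  ⋃ c ∈ hsumSet H.fadd (fun k => hprod H.fmul (d.lam i j k)), H.smul c (d.h i j)

def aA (d : AData F L) (i : Fin (d.t + 1)) (j : Fin (d.m i + 1)) : Set F :=
  hsumSet H.fadd (fun k =>
    hprod H.fmul (fun r => d.lam i j (d.σij i j k) (d.σijk i j (d.σij i j k) r)))

def aG' (d : AData F L) (i : Fin (d.t + 1)) (j : Fin (d.m (d.σ i) + 1)) : Set L :=
  ⋃ c ∈ aA (H := H) d (d.σ i) (d.σi (d.σ i) j), H.smul c (d.h (d.σ i) (d.σi (d.σ i) j))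

def aLhs (d : AData F L) : Set L :=
  hsumSet H.add (fun i => H.evalBExpr (d.f i) (aG (H := H) d i))

def aRhs (d : AData F L) : Set L :=
  hsumSet H.add (fun i => H.evalBExpr (d.f (d.σ i)) (aG' (H := H) d i))

variable (H)

/-- The relation `𝒜` on a Lie hyperalgebra. -/
def ARel (x y : L) : Prop :=
  ∃ d : AData F L, x ∈ aLhs (H := H) d ∧ y ∈ aRhs (H := H) d

/-- Data for the fundamental relation `ℒ`. -/
structure LData (F L : Type*) where
  t : ℕ
  m : Fin (t + 1) → ℕ
  f : ∀ i, BExpr (m i + 1)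
  h : ∀ i, Fin (m i + 1) → L
  p : ∀ i, Fin (m i + 1) → ℕ
  q : ∀ i j, Fin (p i j + 1) → ℕ
  lam : ∀ i j k, Fin (q i j k + 1) → F

variable {H}

def lG (d : LData F L) (i : Fin (d.t + 1)) (j : Fin (d.m i + 1)) : Set L :=
  ⋃ c ∈ hsumSet H.fadd (fun k => hprod H.fmul (d.lam i j k)), H.smul c (d.h i j)

def lLhs (d : LData F L) : Set L :=
  hsumSet H.add (fun i => H.evalBExpr (d.f i) (lG (H := H) d i))

variable (H)

/-- The fundamental relation `ℒ`: `x ℒ y` iff `{x,y} ⊆ Σ ℓᵢ`. -/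
def LRel (x y : L) : Prop := ∃ d : LData F L, x ∈ lLhs (H := H) d ∧ y ∈ lLhs (H := H) d

/-- Data for the relation `α` on the hyperfield `F`. -/
structure AlphaData (F : Type*) where
  t : ℕ
  σ : Equiv.Perm (Fin (t + 1))
  k : Fin (t + 1) → ℕ
  σi : ∀ i, Equiv.Perm (Fin (k i + 1))
  xs : ∀ i, Fin (k i + 1) → F

/-- The relation `α` on the hyperfield `F`. -/
def alphaRel (a b : F) : Prop :=
  ∃ d : AlphaData F,
    a ∈ hsumSet H.fadd (fun i => hprod H.fmul (d.xs i)) ∧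
    b ∈ hsumSet H.fadd (fun i => hprod H.fmul (fun j => d.xs (d.σ i) (d.σi (d.σ i) j)))

/-- `A ρ̄̄ B` : every element of `A` is related to every element of `B`. -/
def SetRel {α : Type*} (ρ : α → α → Prop) (A B : Set α) : Prop :=
  ∀ a ∈ A, ∀ b ∈ B, ρ a b

/-- A strongly regular relation on a Lie hyperalgebra. -/
structure IsStronglyRegular (ρ : L → L → Prop) : Prop where
  add_left : ∀ x y a, ρ x y → SetRel ρ (H.add a x) (H.add a y)
  add_right : ∀ x y a, ρ x y → SetRel ρ (H.add x a) (H.add y a)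
  smul : ∀ x y (c : F), ρ x y → SetRel ρ (H.smul c x) (H.smul c y)
  bracket_left : ∀ x y a, ρ x y → SetRel ρ (H.bracket a x) (H.bracket a y)
  bracket_right : ∀ x y a, ρ x y → SetRel ρ (H.bracket x a) (H.bracket y a)

/-- A strongly regular relation on the hyperfield `F`. -/
structure IsStronglyRegularF (δ : F → F → Prop) : Prop where
  add_left : ∀ x y a, δ x y → SetRel δ (H.fadd a x) (H.fadd a y)
  add_right : ∀ x y a, δ x y → SetRel δ (H.fadd x a) (H.fadd y a)
  mul_left : ∀ x y a, δ x y → SetRel δ (H.fmul a x) (H.fmul a y)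
  mul_right : ∀ x y a, δ x y → SetRel δ (H.fmul x a) (H.fmul y a)

end LieHyperalgebra


/-- A nonempty subset `K` of a Lie hyperalgebra is an `𝒮ₙ`-part if whenever a sum of
hyperbracket-function expressions `Σ ℓᵢ` meets `K`, every admissibly permuted version
`Σ ℓ'ᵢ` is contained in `K`. -/
def LieHyperalgebra.IsSnPart {F L : Type*} (H : LieHyperalgebra F L) (n : ℕ)
    (K : Set L) : Prop :=
  ∀ d : LieHyperalgebra.SData H n, (d.lhs ∩ K).Nonempty → d.rhs ⊆ K

/-- `P(x) = {y : x 𝒮ₙ y}`. -/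
def LieHyperalgebra.P {F L : Type*} (H : LieHyperalgebra F L) (n : ℕ) (x : L) : Set L :=
  {y | H.SRel n x y}

/-- For a Lie hyperalgebra `L` and `n ≥ 1`, the following are equivalent:
(i) `𝒮ₙ` is transitive; (ii) `𝒮ₙ*(x) = P(x)` for every `x`; (iii) `P(x)` is an
`𝒮ₙ`-part of `L` for every `x`. -/
theorem LieHyperalgebra.SRel_transitive_iff {F L : Type*} (H : LieHyperalgebra F L)
    (n : ℕ) (hn : 1 ≤ n) :
    ((∀ x y z : L, H.SRel n x y → H.SRel n y z → H.SRel n x z) ↔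
      ∀ x y : L, Relation.TransGen (H.SRel n) x y ↔ y ∈ H.P n x) ∧
    ((∀ x y : L, Relation.TransGen (H.SRel n) x y ↔ y ∈ H.P n x) ↔
      ∀ x : L, H.IsSnPart n (H.P n x)) := by
  have h1 : (∀ x y z : L, H.SRel n x y → H.SRel n y z → H.SRel n x z) ↔
      ∀ x y : L, Relation.TransGen (H.SRel n) x y ↔ y ∈ H.P n x := by
    constructor
    · intro tr x y
      constructor
      · intro h
        induction h with
        | single h => exact h
        | tail _ h ih => exact tr _ _ _ ih h
      · exact fun h => Relation.TransGen.single h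
    · intro h x y z hxy hyz
      exact (h x z).mp ((Relation.TransGen.single hxy).tail hyz)
  have h2 : (∀ x y z : L, H.SRel n x y → H.SRel n y z → H.SRel n x z) ↔
      ∀ x : L, H.IsSnPart n (H.P n x) := by
    constructor
    · rintro tr x d ⟨y, hy, hyP⟩ z hz
      exact tr x y z hyP ⟨d, hy, hz⟩
    · rintro hp x y z hxy ⟨d, hy, hz⟩
      exact hp x d ⟨y, hy, hxy⟩ hz
  exact ⟨h1, h1.symm.trans h2⟩
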